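/- arXiv:0812.0151 — 2 statements merged into one kernel-verified Lean document; each statement's English description precedes it below -/
import Mathlib

section
/- Let k, l, n be natural numbers with l ≤ n and m = k + l. Let D be an m × n integer matrix whose first k rows are zero and whose remaining entries are D_{(k+t), t} = d_t for 0 ≤ t < l with each d_t a nonzero integer, all other entries of D being zero. If W is an m × m integer matrix satisfying W · D = D and det W = 1, then the top-left k × k block M of W (the submatrix of W on the first k rows and first k columns) satisfies det M = 1. -/
/-- If `D` is an `(k+l) × n` integer matrix in Smith-normal-form shape (first `k` rows zero,
then nonzero invariant factors `d t` at positions `(k+t, t)`, all other entries zero) and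
`W` satisfies `W * D = D` with `det W = 1`, then the top-left `k × k` block of `W`
has determinant `1`. -/
theorem det_topLeft_block_eq_one (k l n : ℕ) (hl : l ≤ n)
    (d : Fin l → ℤ) (hd : ∀ t, d t ≠ 0)
    (D : Matrix (Fin (k + l)) (Fin n) ℤ)
    (hD1 : ∀ t : Fin l,
      D ⟨k + t, Nat.add_lt_add_left t.isLt k⟩ ⟨t, lt_of_lt_of_le t.isLt hl⟩ = d t)
    (hD0 : ∀ (i : Fin (k + l)) (j : Fin n),
      ¬((i : ℕ) = k + (j : ℕ) ∧ (j : ℕ) < l) → D i j = 0)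
    (W : Matrix (Fin (k + l)) (Fin (k + l)) ℤ)
    (hW : W * D = D) (hdetW : W.det = 1) :
    (W.submatrix (Fin.castAdd l) (Fin.castAdd l)).det = 1 := by
  have key : ∀ (i : Fin (k + l)) (t : Fin l),
      W i ⟨k + t, Nat.add_lt_add_left t.isLt k⟩ =
        if i = ⟨k + t, Nat.add_lt_add_left t.isLt k⟩ then 1 else 0 := by
    intro i t
    set it : Fin (k + l) := ⟨k + t, Nat.add_lt_add_left t.isLt k⟩ with hit
    set jt : Fin n := ⟨t, lt_of_lt_of_le t.isLt hl⟩ with hjt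
    have h1 : (W * D) i jt = D i jt := by rw [hW]
    rw [Matrix.mul_apply] at h1
    have hsum : ∑ x, W i x * D x jt = W i it * d t := by
      rw [Finset.sum_eq_single it]
      · rw [hjt, hit, hD1]
      · intro x _ hx
        rw [hD0 x jt, mul_zero]
        rintro ⟨hx1, _⟩
        exact hx (Fin.ext (by simpa [hjt] using hx1))
      · simp
    rw [hsum] at h1
    by_cases hcase : i = it
    · subst hcase
      rw [show D it jt = d t from by rw [hit, hjt, hD1]] at h1
      rw [if_pos rfl]
      exact mul_right_cancel₀ (hd t) (by rw [h1, one_mul])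
    · rw [hD0 i jt (by
        rintro ⟨h1', _⟩
        exact hcase (Fin.ext (by simpa [hjt] using h1')))] at h1
      rw [if_neg hcase]
      exact (mul_eq_zero.mp h1).resolve_right (hd t)
  have hW' : W.submatrix (finSumFinEquiv (m := k) (n := l)) finSumFinEquiv =
      Matrix.fromBlocks (W.submatrix (Fin.castAdd l) (Fin.castAdd l)) 0
        (W.submatrix (Fin.natAdd k) (Fin.castAdd l)) 1 := by
    ext i j
    cases i with
    | inl i =>
      cases j with
      | inl j => rfl
      | inr j =>
        have h := key (Fin.castAdd l i) j
        have hne : (Fin.castAdd l i : Fin (k + l)) ≠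
            ⟨k + (j : ℕ), Nat.add_lt_add_left j.isLt k⟩ := by
          intro hcontra
          have : (i : ℕ) = k + (j : ℕ) := by
            simpa using congrArg Fin.val hcontra
          omega
        simp only [Matrix.submatrix_apply, Matrix.fromBlocks_apply₁₂]
        rw [show (finSumFinEquiv (Sum.inl i) : Fin (k + l)) = Fin.castAdd l i from rfl,
          show (finSumFinEquiv (Sum.inr j) : Fin (k + l)) =
            ⟨k + (j : ℕ), Nat.add_lt_add_left j.isLt k⟩ from rfl, h, if_neg hne]
        rfl
    | inr i =>
      cases j with
      | inl j => rfl
      | inr j =>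
        have h := key (Fin.natAdd k i) j
        simp only [Matrix.submatrix_apply, Matrix.fromBlocks_apply₂₂]
        rw [show (finSumFinEquiv (Sum.inr i) : Fin (k + l)) = Fin.natAdd k i from rfl,
          show (finSumFinEquiv (Sum.inr j) : Fin (k + l)) =
            ⟨k + (j : ℕ), Nat.add_lt_add_left j.isLt k⟩ from rfl, h]
        have heq : (Fin.natAdd k i = (⟨k + (j : ℕ), Nat.add_lt_add_left j.isLt k⟩ :
            Fin (k + l))) ↔ i = j := by
          constructor
          · intro hc
            have : k + (i : ℕ) = k + (j : ℕ) := by simpa using congrArg Fin.val hc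
            exact Fin.ext (by omega)
          · rintro rfl; rfl
        by_cases hij : i = j
        · subst hij; simp [Matrix.one_apply]; exact Fin.ext rfl
        · rw [if_neg (fun hc => hij (heq.mp hc))]
          simp [Matrix.one_apply, hij]
  have hdet : (W.submatrix (finSumFinEquiv (m := k) (n := l)) finSumFinEquiv).det = W.det :=
    Matrix.det_submatrix_equiv_self _ _
  rw [hW', Matrix.det_fromBlocks_zero₁₂] at hdet
  simpa [hdetW] using hdet
end

section
/- Let k, l, n be natural numbers with l ≤ n and m = k + l. Let X be an m × n integer matrix and let D be an m × n integer matrix whose first k rows are zero and whose remaining entries are D_{(k+t), t} = d_t for 0 ≤ t < l with each d_t a nonzero integer, all other entries of D being zero. Suppose U and U' are m × m integer matrices with det U = 1 and det U' = 1 such that U · X = D and U' · X = D. Then there exists a k × k integer matrix M with det M = 1 such that for every i < k, the i-th row of U equals the M-linear combination of the first k rows of U': U_{i,p} = Σ_{j<k} M_{i,j} · U'_{j,p} for all p < m. In other words, the ℤ-bases for the cohomology group obtained from the zero rows of D after applying the change-of-basis matrices U and U' respectively are related by a transition matrix of determinant 1, hence are equivalent. -/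
/-- If `U * X = D = U' * X` where `D` is in Smith-normal-form shape (first `k` rows zero,
then nonzero invariant factors on a shifted diagonal) and `det U = det U' = 1`, then the
first `k` rows of `U` and of `U'` are related by a `k × k` integer matrix of determinant `1`:
the two induced bases for the cohomology group are equivalent. -/
theorem smith_bases_equivalent (k l n : ℕ) (hl : l ≤ n)
    (d : Fin l → ℤ) (hd : ∀ t, d t ≠ 0)
    (X D : Matrix (Fin (k + l)) (Fin n) ℤ)
    (hD1 : ∀ t : Fin l,
      D ⟨k + t, Nat.add_lt_add_left t.isLt k⟩ ⟨t, lt_of_lt_of_le t.isLt hl⟩ = d t)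
    (hD0 : ∀ (i : Fin (k + l)) (j : Fin n),
      ¬((i : ℕ) = k + (j : ℕ) ∧ (j : ℕ) < l) → D i j = 0)
    (U U' : Matrix (Fin (k + l)) (Fin (k + l)) ℤ)
    (hU : U.det = 1) (hU' : U'.det = 1)
    (hUX : U * X = D) (hU'X : U' * X = D) :
    ∃ M : Matrix (Fin k) (Fin k) ℤ, M.det = 1 ∧
      ∀ (i : Fin k) (p : Fin (k + l)),
        U (Fin.castAdd l i) p = ∑ j : Fin k, M i j * U' (Fin.castAdd l j) p := by
  have hU'unit : IsUnit U'.det := by rw [hU']; exact isUnit_one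
  set W : Matrix (Fin (k + l)) (Fin (k + l)) ℤ := U * U'⁻¹ with hWdef
  have hWU' : W * U' = U := by
    rw [hWdef, Matrix.mul_assoc, Matrix.nonsing_inv_mul U' hU'unit, Matrix.mul_one]
  have hWD : W * D = D := by
    conv_lhs => rw [← hU'X, ← Matrix.mul_assoc, hWU', hUX]
  have key : ∀ (i : Fin (k + l)) (t : Fin l),
      W i ⟨k + t, Nat.add_lt_add_left t.isLt k⟩ * d t
        = D i ⟨t, lt_of_lt_of_le t.isLt hl⟩ := by
    intro i t
    have h := congrFun (congrFun hWD i) ⟨t, lt_of_lt_of_le t.isLt hl⟩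
    rw [Matrix.mul_apply] at h
    have hsum : (∑ q, W i q * D q ⟨t, lt_of_lt_of_le t.isLt hl⟩)
        = W i ⟨k + t, Nat.add_lt_add_left t.isLt k⟩
            * D ⟨k + t, Nat.add_lt_add_left t.isLt k⟩ ⟨t, lt_of_lt_of_le t.isLt hl⟩ := by
      refine Finset.sum_eq_single _ ?_ ?_
      · intro q _ hq
        rw [hD0 q _ ?_, mul_zero]
        rintro ⟨h1, -⟩
        exact hq (Fin.ext h1)
      · intro h; exact absurd (Finset.mem_univ _) h
    rw [hsum, hD1 t] at h
    exact h
  have hTR : ∀ (i : Fin k) (t : Fin l),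
      W (Fin.castAdd l i) ⟨k + t, Nat.add_lt_add_left t.isLt k⟩ = 0 := by
    intro i t
    have h := key (Fin.castAdd l i) t
    rw [hD0 _ _ ?_] at h
    · exact (mul_eq_zero.mp h).resolve_right (hd t)
    · rintro ⟨h1, -⟩
      simp only [Fin.coe_castAdd] at h1
      have := i.isLt
      omega
  have hBR : ∀ s t : Fin l,
      W ⟨k + s, Nat.add_lt_add_left s.isLt k⟩ ⟨k + t, Nat.add_lt_add_left t.isLt k⟩
        = if s = t then 1 else 0 := by
    intro s t
    have h := key ⟨k + s, Nat.add_lt_add_left s.isLt k⟩ t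
    by_cases hst : s = t
    · subst hst
      rw [hD1 s] at h
      rw [if_pos rfl]
      exact mul_right_cancel₀ (hd s) (h.trans (one_mul (d s)).symm)
    · rw [hD0 _ _ ?_] at h
      · rw [if_neg hst]
        exact (mul_eq_zero.mp h).resolve_right (hd t)
      · rintro ⟨h1, -⟩
        simp only at h1
        exact hst (Fin.ext (by omega))
  refine ⟨W.submatrix (Fin.castAdd l) (Fin.castAdd l), ?_, ?_⟩
  · have hdetW : W.det = 1 := by
      have hm := Matrix.det_mul W U'
      rw [hWU', hU, hU', mul_one] at hm
      exact hm.symm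
    have hre : W.submatrix finSumFinEquiv finSumFinEquiv
        = Matrix.fromBlocks (W.submatrix (Fin.castAdd l) (Fin.castAdd l)) 0
            (W.submatrix (Fin.natAdd k) (Fin.castAdd l)) 1 := by
      ext i j
      cases i with
      | inl i =>
        cases j with
        | inl j => simp
        | inr j =>
          simp only [Matrix.submatrix_apply, finSumFinEquiv_apply_left,
            finSumFinEquiv_apply_right, Matrix.fromBlocks_apply₁₂, Matrix.zero_apply]
          exact hTR i j
      | inr i =>
        cases j with
        | inl j => simp
        | inr j =>
          simp only [Matrix.submatrix_apply, finSumFinEquiv_apply_right,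
            Matrix.fromBlocks_apply₂₂]
          rw [Matrix.one_apply]
          exact hBR i j
    calc (W.submatrix (Fin.castAdd l) (Fin.castAdd l)).det
        = (W.submatrix finSumFinEquiv finSumFinEquiv).det := by
          rw [hre, Matrix.det_fromBlocks_zero₁₂, Matrix.det_one, mul_one]
      _ = W.det := Matrix.det_submatrix_equiv_self _ _
      _ = 1 := hdetW
  · intro i p
    have h := congrFun (congrFun hWU'.symm (Fin.castAdd l i)) p
    rw [Matrix.mul_apply] at h
    rw [h, Fin.sum_univ_add]
    have hz : ∑ t : Fin l,
        W (Fin.castAdd l i) (Fin.natAdd k t) * U' (Fin.natAdd k t) p = 0 := by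
      apply Finset.sum_eq_zero
      intro t _
      rw [show W (Fin.castAdd l i) (Fin.natAdd k t) = 0 from hTR i t, zero_mul]
    rw [hz, add_zero]
    rfl
end
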